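/- Let S : Fin n → Finset (Fin E) be such that every coordinate j : Fin E belongs to at least one set S i. Then the function ‖x‖_SM := Real.sqrt (Σ_{i : Fin n} max_{j ∈ S i} (x j)²) (with the maximum over an empty set taken as 0) is a norm on ℝ^E: it satisfies the triangle inequality ‖x+y‖_SM ≤ ‖x‖_SM + ‖y‖_SM, absolute homogeneity ‖c•x‖_SM = |c|·‖x‖_SM, and ‖x‖_SM = 0 if and only if x = 0. -/

import Mathlib

/-- If every coordinate belongs to at least one set `S i`, then the Set-Max
function `x ↦ √(Σᵢ max_{j ∈ S i} (x j)²)` (max over the empty set being 0) is a norm on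
`ℝ^E`. -/
theorem stmt7 (n E : ℕ)
    (S : Fin n → Finset (Fin E))
    (hcover : ∀ ℓ : Fin E, ∃ i, ℓ ∈ S i)
    (SM : (Fin E → ℝ) → ℝ)
    (hSM : ∀ x : Fin E → ℝ,
      SM x = Real.sqrt (∑ i, sSup ((fun j => (x j) ^ 2) '' (S i : Set (Fin E))))) :
    (∀ x y : Fin E → ℝ, SM (x + y) ≤ SM x + SM y) ∧
    (∀ (c : ℝ) (x : Fin E → ℝ), SM (c • x) = |c| * SM x) ∧
    (∀ x : Fin E → ℝ, SM x = 0 ↔ x = 0) := by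
  set M : Fin n → (Fin E → ℝ) → ℝ := fun i x =>
    if h : (S i).Nonempty then (S i).sup' h (fun j => |x j|) else 0 with hMdef
  have hM0 : ∀ i x, 0 ≤ M i x := by
    intro i x
    by_cases h : (S i).Nonempty
    · simp only [hMdef, dif_pos h]
      obtain ⟨j, hj⟩ := h
      exact le_trans (abs_nonneg (x j)) (Finset.le_sup' (fun j => |x j|) hj)
    · simp [hMdef, dif_neg h]
  have hle : ∀ i x (j : Fin E), j ∈ S i → |x j| ≤ M i x := by
    intro i x j hj
    have hne : (S i).Nonempty := ⟨j, hj⟩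
    simp only [hMdef, dif_pos hne]
    exact Finset.le_sup' (fun j => |x j|) hj
  have hsup : ∀ i (x : Fin E → ℝ),
      sSup ((fun j => (x j) ^ 2) '' (S i : Set (Fin E))) = (M i x) ^ 2 := by
    intro i x
    by_cases h : (S i).Nonempty
    · rw [← Finset.sup'_eq_csSup_image (S i) h]
      apply le_antisymm
      · apply Finset.sup'_le
        intro j hj
        rw [← sq_abs]
        exact pow_le_pow_left₀ (abs_nonneg _) (hle i x j hj) 2
      · obtain ⟨j, hj, hj2⟩ := Finset.exists_mem_eq_sup' h (fun j => |x j|)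
        simp only [hMdef, dif_pos h]
        rw [hj2, sq_abs]
        exact Finset.le_sup' (fun j => x j ^ 2) hj
    · rw [Finset.not_nonempty_iff_eq_empty] at h
      simp [hMdef, h, Real.sSup_empty]
  have hSM' : ∀ x : Fin E → ℝ, SM x = Real.sqrt (∑ i, (M i x) ^ 2) := by
    intro x
    rw [hSM]
    congr 1
    exact Finset.sum_congr rfl fun i _ => hsup i x
  refine ⟨?_, ?_, ?_⟩
  · -- triangle inequality
    intro x y
    have hMt : ∀ i, M i (x + y) ≤ M i x + M i y := by
      intro i
      by_cases h : (S i).Nonempty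
      · simp only [hMdef, dif_pos h]
        apply Finset.sup'_le
        intro j hj
        calc |(x + y) j| = |x j + y j| := rfl
          _ ≤ |x j| + |y j| := abs_add_le _ _
          _ ≤ _ := add_le_add (Finset.le_sup' (fun j => |x j|) hj) (Finset.le_sup' (fun j => |y j|) hj)
      · simp [hMdef, dif_neg h]
    set u : EuclideanSpace ℝ (Fin n) := WithLp.toLp 2 (fun i => M i x) with hu
    set v : EuclideanSpace ℝ (Fin n) := WithLp.toLp 2 (fun i => M i y) with hv
    have hnu : SM x = ‖u‖ := by
      rw [hSM', EuclideanSpace.norm_eq]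
      congr 1
      exact Finset.sum_congr rfl fun i _ => by
        rw [hu]; simp [Real.norm_eq_abs, sq_abs]
    have hnv : SM y = ‖v‖ := by
      rw [hSM', EuclideanSpace.norm_eq]
      congr 1
      exact Finset.sum_congr rfl fun i _ => by
        rw [hv]; simp [Real.norm_eq_abs, sq_abs]
    have key : SM (x + y) ≤ ‖u + v‖ := by
      rw [hSM', EuclideanSpace.norm_eq]
      apply Real.sqrt_le_sqrt
      apply Finset.sum_le_sum
      intro i _
      have : (u + v) i = M i x + M i y := rfl
      rw [this, Real.norm_eq_abs, sq_abs]
      exact pow_le_pow_left₀ (hM0 i _) (hMt i) 2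
    calc SM (x + y) ≤ ‖u + v‖ := key
      _ ≤ ‖u‖ + ‖v‖ := norm_add_le u v
      _ = SM x + SM y := by rw [hnu, hnv]
  · -- homogeneity
    intro c x
    have hMs : ∀ i, M i (c • x) = |c| * M i x := by
      intro i
      by_cases h : (S i).Nonempty
      · simp only [hMdef, dif_pos h]
        apply le_antisymm
        · apply Finset.sup'_le
          intro j hj
          have : |(c • x) j| = |c| * |x j| := by
            simp [abs_mul]
          rw [this]
          exact mul_le_mul_of_nonneg_left (Finset.le_sup' (fun j => |x j|) hj) (abs_nonneg c)
        · obtain ⟨j, hj, hj2⟩ := Finset.exists_mem_eq_sup' h (fun j => |x j|)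
          rw [hj2]
          have : |c| * |x j| = |(c • x) j| := by simp [abs_mul]
          rw [this]
          exact Finset.le_sup' (fun j => |(c • x) j|) hj
      · simp [hMdef, dif_neg h]
    rw [hSM', hSM']
    have : ∑ i, (M i (c • x)) ^ 2 = |c| ^ 2 * ∑ i, (M i x) ^ 2 := by
      rw [Finset.mul_sum]
      exact Finset.sum_congr rfl fun i _ => by rw [hMs i, mul_pow]
    rw [this, Real.sqrt_mul (sq_nonneg |c|), Real.sqrt_sq (abs_nonneg c)]
  · -- definiteness
    intro x
    constructor
    · intro hx
      rw [hSM'] at hx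
      have hsum : ∑ i, (M i x) ^ 2 = 0 := by
        have hnn : (0 : ℝ) ≤ ∑ i, (M i x) ^ 2 :=
          Finset.sum_nonneg fun i _ => sq_nonneg _
        nlinarith [Real.sq_sqrt hnn, hx]
      have hMi : ∀ i ∈ Finset.univ, (M i x) ^ 2 = 0 :=
        (Finset.sum_eq_zero_iff_of_nonneg fun i _ => sq_nonneg _).mp hsum
      funext j
      obtain ⟨i, hj⟩ := hcover j
      have h1 : |x j| ≤ M i x := hle i x j hj
      have h2 : M i x = 0 := by
        have := hMi i (Finset.mem_univ i)
        exact pow_eq_zero_iff (by norm_num) |>.mp this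
      have : |x j| ≤ 0 := h2 ▸ h1
      simpa using le_antisymm this (abs_nonneg _)
    · intro hx
      subst hx
      rw [hSM']
      have : ∀ i, M i (0 : Fin E → ℝ) = 0 := by
        intro i
        by_cases h : (S i).Nonempty
        · simp [hMdef, dif_pos h]
        · simp [hMdef, dif_neg h]
      simp [this]
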